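/- (Lemma: PAC bound on the composed CDF) Let A and B be real-valued random variables with CDFs Φ_A and Φ_B. Let {A_i}_{i=1}^n be i.i.d. samples with CDF Φ_A and {B_i}_{i=1}^n be i.i.d. samples with CDF Φ_B, with empirical CDFs Φ_A⁽ⁿ⁾ and Φ_B⁽ⁿ⁾. Let p ∈ (0,1), α ∈ (0,1), and ε(α,n) = √(ln(2/α)/(2n)). Then with probability at least 1 − 2α: v̲(p,α,n) ≤ Φ_B(Φ_A^{-1}(p)) ≤ v̄(p,α,n), where v̲(p,α,n) = Φ_B⁽ⁿ⁾((Φ_A⁽ⁿ⁾ + ε(α,n))^{-1}(p)) − ε(α,n) and v̄(p,α,n) = Φ_B⁽ⁿ⁾((Φ_A⁽ⁿ⁾ − ε(α,n))^{-1}(p)) + ε(α,n). -/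

import Mathlib

open MeasureTheory

/-- The generalized inverse `H⁻¹(p) = inf {x : ℝ | H x ≥ p}` of a function `H : ℝ → ℝ`,
valued in the extended reals so that the convention `inf ∅ = +∞` holds. -/
noncomputable def geninvE (H : ℝ → ℝ) (p : ℝ) : EReal :=
  sInf ((fun x : ℝ => (x : EReal)) '' {x : ℝ | p ≤ H x})

/-- Evaluation of a (bounded, nondecreasing) function `H : ℝ → ℝ` at an extended real:
at a finite point it is `H` itself, at `-∞` it is `inf (range H)` and at `+∞` it is
`sup (range H)` (the natural monotone extension). -/
noncomputable def evalE (H : ℝ → ℝ) (x : EReal) : ℝ :=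
  if x = ⊥ then sInf (Set.range H) else if x = ⊤ then sSup (Set.range H) else H x.toReal

/-- The empirical CDF of the samples `X 0, …, X (n-1)` evaluated at the outcome `ω` and
the point `x`: `Φ⁽ⁿ⁾(x) = (1/n) ∑_{i=1}^n 1[X i ≤ x]`. -/
noncomputable def empCDF {Ω : Type*} (n : ℕ) (X : Fin n → Ω → ℝ) (ω : Ω) (x : ℝ) : ℝ :=
  (n : ℝ)⁻¹ * ∑ i : Fin n, if X i ω ≤ x then (1 : ℝ) else 0

section Aux

open Real ProbabilityTheory Filter

/-- Hoeffding's lemma for a Bernoulli(m) variable (mgf form, scalar inequality). -/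
theorem bernoulli_mgf_le (m : ℝ) (hm0 : 0 ≤ m) (hm1 : m ≤ 1) (t : ℝ) :
    1 - m + m * exp t ≤ exp (m * t + t ^ 2 / 8) := by
  set D : ℝ → ℝ := fun s => 1 - m + m * exp s with hDdef
  have hD : ∀ s, 0 < D s := by
    intro s
    rcases eq_or_lt_of_le hm0 with h | h
    · simp [hDdef, ← h]
    · have h1 : 0 < m * exp s := mul_pos h (exp_pos s)
      have h2 : 0 ≤ 1 - m := by linarith
      simpa [hDdef] using add_pos_of_nonneg_of_pos h2 h1
  set g : ℝ → ℝ := fun s => m * s + s ^ 2 / 8 - Real.log (D s) with hgdef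
  set g1 : ℝ → ℝ := fun s => m + s / 4 - m * exp s / D s with hg1def
  have hDdA : ∀ s, HasDerivAt D (m * exp s) s := by
    intro s
    exact ((Real.hasDerivAt_exp s).const_mul m).const_add (1 - m)
  have hgd : ∀ s, HasDerivAt g (g1 s) s := by
    intro s
    have h1 : HasDerivAt (fun u : ℝ => m * u + u ^ 2 / 8) (m + s / 4) s := by
      have := ((hasDerivAt_id s).const_mul m).add ((hasDerivAt_pow 2 s).div_const 8)
      rw [show m + s / 4 = m * 1 + ((2:ℕ):ℝ) * s ^ (2 - 1) / 8 by norm_num; ring]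
      exact this
    have h2 : HasDerivAt (fun u => Real.log (D u)) (m * exp s / D s) s :=
      (hDdA s).log (hD s).ne'
    exact h1.sub h2
  have hg1d : ∀ s, HasDerivAt g1
      (1 / 4 - (m * exp s * D s - m * exp s * (m * exp s)) / (D s) ^ 2) s := by
    intro s
    have h1 : HasDerivAt (fun u : ℝ => m + u / 4) (1 / 4) s := by
      simpa using ((hasDerivAt_id s).div_const 4).const_add m
    have h2 : HasDerivAt (fun u => m * exp u / D u)
        ((m * exp s * D s - m * exp s * (m * exp s)) / (D s) ^ 2) s :=
      (((Real.hasDerivAt_exp s).const_mul m)).div (hDdA s) (hD s).ne'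
    exact h1.sub h2
  have hg2nonneg : ∀ s, 0 ≤ 1 / 4 - (m * exp s * D s - m * exp s * (m * exp s)) / (D s) ^ 2 := by
    intro s
    have hDs := hD s
    have hnum : m * exp s * D s - m * exp s * (m * exp s) ≤ (D s) ^ 2 / 4 := by
      have : D s = 1 - m + m * exp s := rfl
      nlinarith [sq_nonneg ((1 - m) - m * exp s)]
    have : (m * exp s * D s - m * exp s * (m * exp s)) / (D s) ^ 2 ≤ 1 / 4 := by
      rw [div_le_iff₀ (by positivity)]
      nlinarith
    linarith
  have hg1mono : Monotone g1 := by
    apply monotone_of_deriv_nonneg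
    · exact fun s => (hg1d s).differentiableAt
    · intro s
      rw [(hg1d s).deriv]
      exact hg2nonneg s
  have hg10 : g1 0 = 0 := by
    have : D 0 = 1 := by simp [hDdef]
    simp [hg1def, this]
  have hg0 : g 0 = 0 := by
    have : D 0 = 1 := by simp [hDdef]
    simp [hgdef, this]
  have hgnonneg : 0 ≤ g t := by
    rcases le_total 0 t with ht | ht
    · have hmono : MonotoneOn g (Set.Ici 0) := by
        apply monotoneOn_of_deriv_nonneg (convex_Ici 0)
          (fun s _ => ((hgd s).differentiableAt.continuousAt.continuousWithinAt))
          (fun s _ => ((hgd s).differentiableAt.differentiableWithinAt))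
        intro s hs
        rw [(hgd s).deriv]
        rw [interior_Ici] at hs
        have := hg1mono (le_of_lt hs)
        rw [hg10] at this
        exact this
      have := hmono (Set.self_mem_Ici) (Set.mem_Ici.mpr ht) ht
      rwa [hg0] at this
    · have hanti : AntitoneOn g (Set.Iic 0) := by
        apply antitoneOn_of_deriv_nonpos (convex_Iic 0)
          (fun s _ => ((hgd s).differentiableAt.continuousAt.continuousWithinAt))
          (fun s _ => ((hgd s).differentiableAt.differentiableWithinAt))
        intro s hs
        rw [(hgd s).deriv]
        rw [interior_Iic] at hs
        have := hg1mono (le_of_lt hs)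
        rw [hg10] at this
        linarith
      have := hanti (Set.mem_Iic.mpr ht) (Set.self_mem_Iic) ht
      rwa [hg0] at this
  have hlog : Real.log (D t) ≤ m * t + t ^ 2 / 8 := by
    have := hgnonneg
    simp only [hgdef] at this
    linarith
  calc 1 - m + m * exp t = D t := rfl
    _ ≤ exp (m * t + t ^ 2 / 8) := by
        rw [← Real.exp_log (hD t)]
        exact exp_le_exp.mpr hlog

/-- Hoeffding's upper-tail inequality for sums of independent `{0,1}`-valued variables. -/
theorem hoeffding_tail {Ω : Type*} [MeasurableSpace Ω] (μ : Measure Ω) [IsProbabilityMeasure μ]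
    (n : ℕ) (X : Fin n → Ω → ℝ) (hmeas : ∀ i, Measurable (X i))
    (hind : iIndepFun X μ)
    (h01 : ∀ i ω, X i ω = 0 ∨ X i ω = 1)
    (m : Fin n → ℝ) (hm : ∀ i, m i = ∫ ω, X i ω ∂μ)
    (ε : ℝ) (hε : 0 ≤ ε) :
    (μ {ω | (n : ℝ) * ε ≤ ∑ i, (X i ω - m i)}).toReal ≤ exp (-2 * n * ε ^ 2) := by
  have hXint : ∀ i, Integrable (X i) μ := by
    intro i
    refine (integrable_const (1 : ℝ)).mono' (hmeas i).aestronglyMeasurable ?_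
    refine ae_of_all _ fun ω => ?_
    rcases h01 i ω with h | h <;> simp [h]
  have hm0 : ∀ i, 0 ≤ m i := by
    intro i
    rw [hm i]
    refine integral_nonneg fun ω => ?_
    rcases h01 i ω with h | h <;> simp [h]
  have hm1 : ∀ i, m i ≤ 1 := by
    intro i
    rw [hm i]
    calc ∫ ω, X i ω ∂μ ≤ ∫ _ω, (1 : ℝ) ∂μ := by
          refine integral_mono (hXint i) (integrable_const 1) fun ω => ?_
          rcases h01 i ω with h | h <;> simp [h]
      _ = 1 := by simp
  set t : ℝ := 4 * ε with ht_def
  have ht : 0 ≤ t := by positivity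
  have hint : ∀ i, Integrable (fun ω => exp (t * X i ω)) μ := by
    intro i
    refine (integrable_const (exp |t|)).mono'
      (((hmeas i).const_mul t).exp).aestronglyMeasurable ?_
    refine ae_of_all _ fun ω => ?_
    rw [Real.norm_eq_abs, abs_of_nonneg (exp_pos _).le]
    apply exp_le_exp.mpr
    rcases h01 i ω with h | h <;> simp [h, le_abs_self, abs_nonneg]
  have hmgf_i : ∀ i, mgf (X i) μ t = 1 - m i + m i * exp t := by
    intro i
    have hptwise : ∀ ω, exp (t * X i ω) = 1 - X i ω + X i ω * exp t := by
      intro ω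
      rcases h01 i ω with h | h <;> simp [h]
    calc mgf (X i) μ t = ∫ ω, exp (t * X i ω) ∂μ := rfl
      _ = ∫ ω, (1 - X i ω + X i ω * exp t) ∂μ := by
          exact integral_congr_ae (ae_of_all _ hptwise)
      _ = (∫ _ω, (1:ℝ) ∂μ) - (∫ ω, X i ω ∂μ) + (∫ ω, X i ω ∂μ) * exp t := by
          have h1 : Integrable (fun ω => 1 - X i ω) μ := (integrable_const 1).sub (hXint i)
          have h2 : Integrable (fun ω => X i ω * exp t) μ := (hXint i).mul_const _
          rw [integral_add h1 h2, integral_sub (integrable_const 1) (hXint i),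
            integral_mul_const]
      _ = 1 - m i + m i * exp t := by rw [hm i]; simp
  have hmgf_le : ∀ i, mgf (X i) μ t ≤ exp (m i * t + t ^ 2 / 8) := fun i => by
    rw [hmgf_i i]; exact bernoulli_mgf_le (m i) (hm0 i) (hm1 i) t
  have hset : {ω | (n : ℝ) * ε ≤ ∑ i, (X i ω - m i)}
      = {ω | (∑ i, m i) + n * ε ≤ (∑ i, X i) ω} := by
    ext ω
    simp only [Set.mem_setOf_eq, Finset.sum_sub_distrib, Finset.sum_apply]
    constructor <;> intro h <;> linarith
  rw [hset]
  have hintW : Integrable (fun ω => exp (t * (∑ i, X i) ω)) μ :=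
    hind.integrable_exp_mul_sum hmeas fun i _ => hint i
  calc (μ {ω | (∑ i, m i) + ↑n * ε ≤ (∑ i, X i) ω}).toReal
      ≤ exp (-t * ((∑ i, m i) + n * ε)) * mgf (∑ i, X i) μ t :=
        measure_ge_le_exp_mul_mgf _ ht hintW
    _ = exp (-t * ((∑ i, m i) + n * ε)) * ∏ i, mgf (X i) μ t := by
        rw [hind.mgf_sum hmeas Finset.univ]
    _ ≤ exp (-t * ((∑ i, m i) + n * ε)) * ∏ i, exp (m i * t + t ^ 2 / 8) := by
        refine mul_le_mul_of_nonneg_left ?_ (exp_pos _).le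
        exact Finset.prod_le_prod (fun i _ => mgf_nonneg) (fun i _ => hmgf_le i)
    _ = exp (-t * ((∑ i, m i) + n * ε) + ∑ i, (m i * t + t ^ 2 / 8)) := by
        rw [← Real.exp_sum, ← Real.exp_add]
    _ ≤ exp (-2 * n * ε ^ 2) := by
        apply exp_le_exp.mpr
        have hsum : ∑ i : Fin n, (m i * t + t ^ 2 / 8) = (∑ i, m i) * t + n * (t ^ 2 / 8) := by
          rw [Finset.sum_add_distrib, ← Finset.sum_mul]
          simp [Finset.card_univ]
        rw [hsum, ht_def]
        ring_nf
        nlinarith [sq_nonneg ε, Nat.cast_nonneg (α := ℝ) n]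

/-- Hoeffding's lower-tail inequality for sums of independent `{0,1}`-valued variables. -/
theorem hoeffding_tail_lower {Ω : Type*} [MeasurableSpace Ω] (μ : Measure Ω)
    [IsProbabilityMeasure μ]
    (n : ℕ) (X : Fin n → Ω → ℝ) (hmeas : ∀ i, Measurable (X i))
    (hind : iIndepFun X μ)
    (h01 : ∀ i ω, X i ω = 0 ∨ X i ω = 1)
    (m : Fin n → ℝ) (hm : ∀ i, m i = ∫ ω, X i ω ∂μ)
    (ε : ℝ) (hε : 0 ≤ ε) :
    (μ {ω | (n : ℝ) * ε ≤ ∑ i, (m i - X i ω)}).toReal ≤ exp (-2 * n * ε ^ 2) := by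
  have hres := hoeffding_tail μ n (fun i ω => 1 - X i ω)
    (fun i => (measurable_const.sub (hmeas i)))
    (hind.comp (fun _ => fun x : ℝ => 1 - x) (fun _ => measurable_const.sub measurable_id))
    (fun i ω => by rcases h01 i ω with h | h <;> simp [h])
    (fun i => 1 - m i)
    (fun i => by
      rw [integral_sub (integrable_const 1) ?_, integral_const]
      · simp [hm i]
      · refine (integrable_const (1 : ℝ)).mono' (hmeas i).aestronglyMeasurable ?_
        refine ae_of_all _ fun ω => ?_
        rcases h01 i ω with h | h <;> simp [h])
    ε hε
  have : {ω | (n : ℝ) * ε ≤ ∑ i, (m i - X i ω)}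
      = {ω | (n : ℝ) * ε ≤ ∑ i, ((1 - X i ω) - (1 - m i))} := by
    ext ω
    have : ∀ i : Fin n, (1 - X i ω) - (1 - m i) = m i - X i ω := fun i => by ring
    simp only [Set.mem_setOf_eq, this]
  rw [this]
  exact hres

lemma geninvE_le_coe {H : ℝ → ℝ} {p x : ℝ} (h : p ≤ H x) : geninvE H p ≤ (x : EReal) :=
  sInf_le ⟨x, h, rfl⟩

lemma coe_le_geninvE {H : ℝ → ℝ} {p c : ℝ} (h : ∀ x, p ≤ H x → c ≤ x) :
    (c : EReal) ≤ geninvE H p := by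
  refine le_sInf ?_
  rintro b ⟨x, hx, rfl⟩
  exact EReal.coe_le_coe_iff.mpr (h x hx)

/-- For a CDF-like function, the generalized inverse at `p ∈ (0,1)` is attained at a
finite quantile. -/
lemma exists_geninv_cdf (H : ℝ → ℝ) (hmono : Monotone H)
    (hrc : ∀ x, ContinuousWithinAt H (Set.Ici x) x)
    (htop : Tendsto H atTop (nhds 1)) (hbot : Tendsto H atBot (nhds 0))
    {p : ℝ} (hp0 : 0 < p) (hp1 : p < 1) :
    ∃ q₀ : ℝ, geninvE H p = (q₀ : EReal) ∧ p ≤ H q₀ ∧ ∀ x < q₀, H x < p := by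
  set S : Set ℝ := {x | p ≤ H x} with hSdef
  have hne : S.Nonempty := by
    have h := htop.eventually (eventually_gt_nhds hp1)
    obtain ⟨x₀, hx₀⟩ := h.exists
    exact ⟨x₀, le_of_lt hx₀⟩
  have hbdd : BddBelow S := by
    have h := hbot.eventually (eventually_lt_nhds hp0)
    rw [eventually_atBot] at h
    obtain ⟨b, hb⟩ := h
    refine ⟨b, fun y hy => ?_⟩
    by_contra hyb
    push_neg at hyb
    exact absurd (hb y hyb.le) (not_lt.mpr hy)
  set q₀ : ℝ := sInf S with hq₀def
  have hq₀S : p ≤ H q₀ := by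
    have htend : Tendsto H (nhdsWithin q₀ (Set.Ioi q₀)) (nhds (H q₀)) :=
      (hrc q₀).tendsto.mono_left (nhdsWithin_mono _ Set.Ioi_subset_Ici_self)
    refine ge_of_tendsto htend ?_
    refine eventually_nhdsWithin_of_forall fun x hx => ?_
    obtain ⟨y, hyS, hyx⟩ := (csInf_lt_iff hbdd hne).mp hx
    exact le_trans hyS (hmono hyx.le)
  have hlt : ∀ x < q₀, H x < p := by
    intro x hx
    by_contra h
    push_neg at h
    exact absurd (csInf_le hbdd h) (not_le.mpr hx)
  refine ⟨q₀, ?_, hq₀S, hlt⟩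
  refine le_antisymm (sInf_le ⟨q₀, hq₀S, rfl⟩) (le_sInf ?_)
  rintro b ⟨x, hx, rfl⟩
  exact EReal.coe_le_coe_iff.mpr (csInf_le hbdd hx)

lemma empCDF_nonneg {Ω : Type*} (n : ℕ) (X : Fin n → Ω → ℝ) (ω : Ω) (x : ℝ) :
    0 ≤ empCDF n X ω x := by
  unfold empCDF
  refine mul_nonneg (by positivity) (Finset.sum_nonneg fun i _ => ?_)
  split <;> norm_num

lemma empCDF_le_one {Ω : Type*} (n : ℕ) (X : Fin n → Ω → ℝ) (ω : Ω) (x : ℝ) :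
    empCDF n X ω x ≤ 1 := by
  unfold empCDF
  rcases Nat.eq_zero_or_pos n with h | h
  · simp [h]
  have hsum : ∑ i : Fin n, (if X i ω ≤ x then (1:ℝ) else 0) ≤ n := by
    calc ∑ i : Fin n, (if X i ω ≤ x then (1:ℝ) else 0) ≤ ∑ _i : Fin n, (1:ℝ) := by
          refine Finset.sum_le_sum fun i _ => ?_
          split <;> norm_num
      _ = n := by simp
  have hn : (0:ℝ) < n := by exact_mod_cast h
  calc (n : ℝ)⁻¹ * ∑ i : Fin n, (if X i ω ≤ x then (1:ℝ) else 0)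
      ≤ (n : ℝ)⁻¹ * n := by
        exact mul_le_mul_of_nonneg_left hsum (by positivity)
    _ = 1 := by field_simp

lemma empCDF_mono {Ω : Type*} (n : ℕ) (X : Fin n → Ω → ℝ) (ω : Ω) :
    Monotone (empCDF n X ω) := by
  intro x y hxy
  unfold empCDF
  refine mul_le_mul_of_nonneg_left (Finset.sum_le_sum fun i _ => ?_) (by positivity)
  by_cases h : X i ω ≤ x
  · simp only [if_pos h, if_pos (le_trans h hxy)]; exact le_refl 1
  · rw [if_neg h]; split <;> norm_num

end Aux

theorem pac_composed_cdf_bound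
    {Ω : Type*} [MeasurableSpace Ω] (μ : Measure Ω) [IsProbabilityMeasure μ]
    (A B : Ω → ℝ) (hA : Measurable A) (hB : Measurable B)
    (ΦA ΦB : ℝ → ℝ)
    (hΦA : ∀ x : ℝ, ΦA x = (μ {ω | A ω ≤ x}).toReal)
    (hΦB : ∀ x : ℝ, ΦB x = (μ {ω | B ω ≤ x}).toReal)
    (n : ℕ) (hn : 0 < n) (As Bs : Fin n → Ω → ℝ)
    (hAsMeas : ∀ i, Measurable (As i)) (hBsMeas : ∀ i, Measurable (Bs i))
    (hAsIndep : ProbabilityTheory.iIndepFun As μ)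
    (hBsIndep : ProbabilityTheory.iIndepFun Bs μ)
    (hAsDist : ∀ (i : Fin n) (x : ℝ), (μ {ω | As i ω ≤ x}).toReal = ΦA x)
    (hBsDist : ∀ (i : Fin n) (x : ℝ), (μ {ω | Bs i ω ≤ x}).toReal = ΦB x)
    (p α ε : ℝ) (hp : p ∈ Set.Ioo (0:ℝ) 1) (hα : α ∈ Set.Ioo (0:ℝ) 1)
    (hε : ε = Real.sqrt (Real.log (2 / α) / (2 * n))) :
    ENNReal.ofReal (1 - 2 * α) ≤
      μ {ω |
        evalE (empCDF n Bs ω) (geninvE (fun x => empCDF n As ω x + ε) p) - ε ≤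
            evalE ΦB (geninvE ΦA p) ∧
          evalE ΦB (geninvE ΦA p) ≤
            evalE (empCDF n Bs ω) (geninvE (fun x => empCDF n As ω x - ε) p) + ε} := by
  classical
  obtain ⟨hp0, hp1⟩ := hp
  obtain ⟨hα0, hα1⟩ := hα
  have hnR : (0:ℝ) < n := by exact_mod_cast hn
  have hlog_nonneg : 0 ≤ Real.log (2 / α) := by
    apply Real.log_nonneg
    rw [le_div_iff₀ hα0]
    linarith
  have hε0 : 0 ≤ ε := hε ▸ Real.sqrt_nonneg _
  have hεsq : ε ^ 2 = Real.log (2 / α) / (2 * n) := by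
    rw [hε, Real.sq_sqrt (by positivity)]
  have hexp : Real.exp (-2 * n * ε ^ 2) = α / 2 := by
    rw [hεsq]
    have h2 : (-2 : ℝ) * n * (Real.log (2 / α) / (2 * n)) = - Real.log (2 / α) := by
      field_simp
    rw [h2, Real.exp_neg, Real.exp_log (by positivity), inv_div]
  -- ΦA is a CDF
  have hmapA : IsProbabilityMeasure (μ.map A) := Measure.isProbabilityMeasure_map hA.aemeasurable
  have hAfun : ΦA = fun x => ProbabilityTheory.cdf (μ.map A) x := by
    funext x
    rw [hΦA x, ProbabilityTheory.cdf_eq_real, measureReal_def, Measure.map_apply hA measurableSet_Iic]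
    rfl
  have hΦAmono : Monotone ΦA := by
    rw [hAfun]; exact fun x y hxy => (ProbabilityTheory.cdf (μ.map A)).mono hxy
  have hΦArc : ∀ x, ContinuousWithinAt ΦA (Set.Ici x) x := by
    rw [hAfun]; exact fun x => (ProbabilityTheory.cdf (μ.map A)).right_continuous x
  have hΦAtop : Filter.Tendsto ΦA Filter.atTop (nhds 1) := by
    rw [hAfun]; exact ProbabilityTheory.tendsto_cdf_atTop (μ.map A)
  have hΦAbot : Filter.Tendsto ΦA Filter.atBot (nhds 0) := by
    rw [hAfun]; exact ProbabilityTheory.tendsto_cdf_atBot (μ.map A)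
  obtain ⟨q₀, hq₀eq, hq₀ge, hq₀lt⟩ := exists_geninv_cdf ΦA hΦAmono hΦArc hΦAtop hΦAbot hp0 hp1
  -- the indicator variables
  set Xa : Fin n → Ω → ℝ := fun i ω => if As i ω ≤ q₀ then 1 else 0 with hXadef
  set Yb : Fin n → Ω → ℝ := fun i ω => if Bs i ω ≤ q₀ then 1 else 0 with hYbdef
  set Za : Fin n → Ω → ℝ := fun i ω => if As i ω < q₀ then 1 else 0 with hZadef
  set c : Fin n → ℝ := fun i => (μ {ω | As i ω < q₀}).toReal with hcdef
  have hXameas : ∀ i, Measurable (Xa i) := fun i =>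
    Measurable.ite (measurableSet_le (hAsMeas i) measurable_const)
      measurable_const measurable_const
  have hYbmeas : ∀ i, Measurable (Yb i) := fun i =>
    Measurable.ite (measurableSet_le (hBsMeas i) measurable_const)
      measurable_const measurable_const
  have hZameas : ∀ i, Measurable (Za i) := fun i =>
    Measurable.ite (measurableSet_lt (hAsMeas i) measurable_const)
      measurable_const measurable_const
  have hXaInd : ProbabilityTheory.iIndepFun Xa μ :=
    hAsIndep.comp (fun _ => fun x : ℝ => if x ≤ q₀ then (1:ℝ) else 0)
      (fun _ => Measurable.ite measurableSet_Iic measurable_const measurable_const)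
  have hYbInd : ProbabilityTheory.iIndepFun Yb μ :=
    hBsIndep.comp (fun _ => fun x : ℝ => if x ≤ q₀ then (1:ℝ) else 0)
      (fun _ => Measurable.ite measurableSet_Iic measurable_const measurable_const)
  have hZaInd : ProbabilityTheory.iIndepFun Za μ :=
    hAsIndep.comp (fun _ => fun x : ℝ => if x < q₀ then (1:ℝ) else 0)
      (fun _ => Measurable.ite measurableSet_Iio measurable_const measurable_const)
  have hXa01 : ∀ i ω, Xa i ω = 0 ∨ Xa i ω = 1 := fun i ω => by
    simp only [hXadef]; split <;> simp
  have hYb01 : ∀ i ω, Yb i ω = 0 ∨ Yb i ω = 1 := fun i ω => by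
    simp only [hYbdef]; split <;> simp
  have hZa01 : ∀ i ω, Za i ω = 0 ∨ Za i ω = 1 := fun i ω => by
    simp only [hZadef]; split <;> simp
  -- means
  have hXa_mean : ∀ i, ΦA q₀ = ∫ ω, Xa i ω ∂μ := by
    intro i
    have hind : Xa i = Set.indicator {ω | As i ω ≤ q₀} (fun _ => (1:ℝ)) := by
      funext ω
      simp [hXadef, Set.indicator_apply, Set.mem_setOf_eq]
    rw [hind, integral_indicator_const _ (measurableSet_le (hAsMeas i) measurable_const)]
    rw [smul_eq_mul, mul_one, measureReal_def, hAsDist i q₀]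
  have hYb_mean : ∀ i, ΦB q₀ = ∫ ω, Yb i ω ∂μ := by
    intro i
    have hind : Yb i = Set.indicator {ω | Bs i ω ≤ q₀} (fun _ => (1:ℝ)) := by
      funext ω
      simp [hYbdef, Set.indicator_apply, Set.mem_setOf_eq]
    rw [hind, integral_indicator_const _ (measurableSet_le (hBsMeas i) measurable_const)]
    rw [smul_eq_mul, mul_one, measureReal_def, hBsDist i q₀]
  have hZa_mean : ∀ i, c i = ∫ ω, Za i ω ∂μ := by
    intro i
    have hind : Za i = Set.indicator {ω | As i ω < q₀} (fun _ => (1:ℝ)) := by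
      funext ω
      simp [hZadef, Set.indicator_apply, Set.mem_setOf_eq]
    rw [hind, integral_indicator_const _ (measurableSet_lt (hAsMeas i) measurable_const)]
    rw [smul_eq_mul, mul_one, measureReal_def, hcdef]
  -- c i ≤ p
  have hc_le : ∀ i, c i ≤ p := by
    intro i
    have hsub : {ω | As i ω < q₀} = ⋃ k : ℕ, {ω | As i ω ≤ q₀ - 1 / (k + 1)} := by
      ext ω
      simp only [Set.mem_setOf_eq, Set.mem_iUnion]
      constructor
      · intro h
        obtain ⟨k, hk⟩ := exists_nat_one_div_lt (sub_pos.mpr h)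
        exact ⟨k, by push_cast at hk ⊢; linarith⟩
      · rintro ⟨k, hk⟩
        have hpos : (0:ℝ) < 1 / ((k:ℝ) + 1) := by positivity
        linarith
    have hmono : Monotone (fun k : ℕ => {ω | As i ω ≤ q₀ - 1 / ((k:ℝ) + 1)}) := by
      intro a b hab ω h
      simp only [Set.mem_setOf_eq] at h ⊢
      have h1 : (1:ℝ) / ((b:ℝ) + 1) ≤ 1 / ((a:ℝ) + 1) := by
        apply one_div_le_one_div_of_le (by positivity)
        have : (a:ℝ) ≤ b := by exact_mod_cast hab
        linarith
      linarith
    have hkbound : ∀ k : ℕ, μ {ω | As i ω ≤ q₀ - 1 / ((k:ℝ) + 1)} ≤ ENNReal.ofReal p := by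
      intro k
      refine (ENNReal.le_ofReal_iff_toReal_le (measure_ne_top μ _) hp0.le).mpr ?_
      rw [hAsDist i]
      have hlt : q₀ - 1 / ((k:ℝ) + 1) < q₀ := by
        have : (0:ℝ) < 1 / ((k:ℝ) + 1) := by positivity
        linarith
      exact (hq₀lt _ hlt).le
    have hμeq : μ {ω | As i ω < q₀} = ⨆ k : ℕ, μ {ω | As i ω ≤ q₀ - 1 / ((k:ℝ) + 1)} := by
      rw [hsub]
      exact hmono.measure_iUnion
    rw [hcdef]
    simp only
    rw [hμeq]
    exact ENNReal.toReal_le_of_le_ofReal hp0.le (iSup_le hkbound)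
  -- the four bad events
  set B1 : Set Ω := {ω | (n : ℝ) * ε ≤ ∑ i, (ΦA q₀ - Xa i ω)} with hB1def
  set B2 : Set Ω := {ω | (n : ℝ) * ε ≤ ∑ i, (Yb i ω - ΦB q₀)} with hB2def
  set B3 : Set Ω := {ω | (n : ℝ) * ε ≤ ∑ i, (Za i ω - c i)} with hB3def
  set B4 : Set Ω := {ω | (n : ℝ) * ε ≤ ∑ i, (ΦB q₀ - Yb i ω)} with hB4def
  have hB1meas : MeasurableSet B1 :=
    measurableSet_le measurable_const
      (Finset.measurable_sum _ fun i _ => measurable_const.sub (hXameas i))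
  have hB2meas : MeasurableSet B2 :=
    measurableSet_le measurable_const
      (Finset.measurable_sum _ fun i _ => (hYbmeas i).sub measurable_const)
  have hB3meas : MeasurableSet B3 :=
    measurableSet_le measurable_const
      (Finset.measurable_sum _ fun i _ => (hZameas i).sub measurable_const)
  have hB4meas : MeasurableSet B4 :=
    measurableSet_le measurable_const
      (Finset.measurable_sum _ fun i _ => measurable_const.sub (hYbmeas i))
  have hB1 : μ B1 ≤ ENNReal.ofReal (α / 2) := by
    refine (ENNReal.le_ofReal_iff_toReal_le (measure_ne_top μ _) (by positivity)).mpr ?_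
    rw [← hexp]
    exact hoeffding_tail_lower μ n Xa hXameas hXaInd hXa01 (fun _ => ΦA q₀)
      (fun i => hXa_mean i) ε hε0
  have hB2 : μ B2 ≤ ENNReal.ofReal (α / 2) := by
    refine (ENNReal.le_ofReal_iff_toReal_le (measure_ne_top μ _) (by positivity)).mpr ?_
    rw [← hexp]
    exact hoeffding_tail μ n Yb hYbmeas hYbInd hYb01 (fun _ => ΦB q₀)
      (fun i => hYb_mean i) ε hε0
  have hB3 : μ B3 ≤ ENNReal.ofReal (α / 2) := by
    refine (ENNReal.le_ofReal_iff_toReal_le (measure_ne_top μ _) (by positivity)).mpr ?_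
    rw [← hexp]
    exact hoeffding_tail μ n Za hZameas hZaInd hZa01 c (fun i => hZa_mean i) ε hε0
  have hB4 : μ B4 ≤ ENNReal.ofReal (α / 2) := by
    refine (ENNReal.le_ofReal_iff_toReal_le (measure_ne_top μ _) (by positivity)).mpr ?_
    rw [← hexp]
    exact hoeffding_tail_lower μ n Yb hYbmeas hYbInd hYb01 (fun _ => ΦB q₀)
      (fun i => hYb_mean i) ε hε0
  set Bad : Set Ω := B1 ∪ B2 ∪ B3 ∪ B4 with hBaddef
  have hBadmeas : MeasurableSet Bad := ((hB1meas.union hB2meas).union hB3meas).union hB4meas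
  have hμBad : μ Bad ≤ ENNReal.ofReal (2 * α) := by
    calc μ Bad ≤ μ B1 + μ B2 + μ B3 + μ B4 := by
          refine le_trans (measure_union_le _ _) ?_
          refine add_le_add (le_trans (measure_union_le _ _)
            (add_le_add (measure_union_le _ _) le_rfl)) le_rfl
      _ ≤ ENNReal.ofReal (α/2) + ENNReal.ofReal (α/2) + ENNReal.ofReal (α/2)
            + ENNReal.ofReal (α/2) := by
          exact add_le_add (add_le_add (add_le_add hB1 hB2) hB3) hB4
      _ = ENNReal.ofReal (2 * α) := by
          rw [← ENNReal.ofReal_add (by positivity) (by positivity),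
            ← ENNReal.ofReal_add (by positivity) (by positivity),
            ← ENNReal.ofReal_add (by positivity) (by positivity)]
          congr 1
          ring
  -- the deterministic part: outside Bad, the desired inequalities hold
  have hsub : Badᶜ ⊆ {ω |
      evalE (empCDF n Bs ω) (geninvE (fun x => empCDF n As ω x + ε) p) - ε ≤
          evalE ΦB (geninvE ΦA p) ∧
        evalE ΦB (geninvE ΦA p) ≤
          evalE (empCDF n Bs ω) (geninvE (fun x => empCDF n As ω x - ε) p) + ε} := by
    intro ω hω
    simp only [hBaddef, Set.compl_union, Set.mem_inter_iff, Set.mem_compl_iff,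
      hB1def, hB2def, hB3def, hB4def, Set.mem_setOf_eq, not_le] at hω
    obtain ⟨⟨⟨hg1, hg2⟩, hg3⟩, hg4⟩ := hω
    -- basic consequences
    have hsumXa : (n:ℝ) * ΦA q₀ - (n:ℝ) * ε < ∑ i, Xa i ω := by
      rw [Finset.sum_sub_distrib, Finset.sum_const, Finset.card_univ, Fintype.card_fin,
        nsmul_eq_mul] at hg1
      linarith
    have hsumYb_ub : ∑ i, Yb i ω < (n:ℝ) * ΦB q₀ + (n:ℝ) * ε := by
      rw [Finset.sum_sub_distrib, Finset.sum_const, Finset.card_univ, Fintype.card_fin,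
        nsmul_eq_mul] at hg2
      linarith
    have hsumYb_lb : (n:ℝ) * ΦB q₀ - (n:ℝ) * ε < ∑ i, Yb i ω := by
      rw [Finset.sum_sub_distrib, Finset.sum_const, Finset.card_univ, Fintype.card_fin,
        nsmul_eq_mul] at hg4
      linarith
    have hsumZa : ∑ i, Za i ω < (n:ℝ) * p + (n:ℝ) * ε := by
      rw [Finset.sum_sub_distrib] at hg3
      have hcsum : ∑ i, c i ≤ (n:ℝ) * p := by
        calc ∑ i, c i ≤ ∑ _i : Fin n, p := Finset.sum_le_sum fun i _ => hc_le i
          _ = (n:ℝ) * p := by rw [Finset.sum_const, Finset.card_univ, Fintype.card_fin,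
            nsmul_eq_mul]
      linarith
    have hempA_eq : empCDF n As ω q₀ = (n:ℝ)⁻¹ * ∑ i, Xa i ω := rfl
    have hempB_eq : empCDF n Bs ω q₀ = (n:ℝ)⁻¹ * ∑ i, Yb i ω := rfl
    -- key pointwise facts
    have hFaq : p ≤ empCDF n As ω q₀ + ε := by
      have h1 : ΦA q₀ - ε ≤ empCDF n As ω q₀ := by
        rw [hempA_eq]
        have h2 : (n:ℝ)⁻¹ * ((n:ℝ) * ΦA q₀ - (n:ℝ) * ε) ≤ (n:ℝ)⁻¹ * ∑ i, Xa i ω :=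
          mul_le_mul_of_nonneg_left hsumXa.le (by positivity)
        calc ΦA q₀ - ε = (n:ℝ)⁻¹ * ((n:ℝ) * ΦA q₀ - (n:ℝ) * ε) := by field_simp
          _ ≤ (n:ℝ)⁻¹ * ∑ i, Xa i ω := h2
      linarith [hq₀ge]
    have hFb_ub : empCDF n Bs ω q₀ ≤ ΦB q₀ + ε := by
      rw [hempB_eq]
      have h2 : (n:ℝ)⁻¹ * ∑ i, Yb i ω ≤ (n:ℝ)⁻¹ * ((n:ℝ) * ΦB q₀ + (n:ℝ) * ε) :=
        mul_le_mul_of_nonneg_left hsumYb_ub.le (by positivity)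
      calc (n:ℝ)⁻¹ * ∑ i, Yb i ω ≤ (n:ℝ)⁻¹ * ((n:ℝ) * ΦB q₀ + (n:ℝ) * ε) := h2
        _ = ΦB q₀ + ε := by field_simp
    have hFb_lb : ΦB q₀ - ε ≤ empCDF n Bs ω q₀ := by
      rw [hempB_eq]
      have h2 : (n:ℝ)⁻¹ * ((n:ℝ) * ΦB q₀ - (n:ℝ) * ε) ≤ (n:ℝ)⁻¹ * ∑ i, Yb i ω :=
        mul_le_mul_of_nonneg_left hsumYb_lb.le (by positivity)
      calc ΦB q₀ - ε = (n:ℝ)⁻¹ * ((n:ℝ) * ΦB q₀ - (n:ℝ) * ε) := by field_simp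
        _ ≤ (n:ℝ)⁻¹ * ∑ i, Yb i ω := h2
    have hFax : ∀ x < q₀, empCDF n As ω x < p + ε := by
      intro x hx
      have hterm : ∀ i : Fin n, (if As i ω ≤ x then (1:ℝ) else 0) ≤ Za i ω := by
        intro i
        by_cases h : As i ω ≤ x
        · simp only [if_pos h, hZadef, if_pos (lt_of_le_of_lt h hx)]
          exact le_refl 1
        · simp only [if_neg h, hZadef]
          split <;> norm_num
      have h1 : ∑ i : Fin n, (if As i ω ≤ x then (1:ℝ) else 0) ≤ ∑ i, Za i ω :=
        Finset.sum_le_sum fun i _ => hterm i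
      have h2 : empCDF n As ω x ≤ (n:ℝ)⁻¹ * ∑ i, Za i ω :=
        mul_le_mul_of_nonneg_left h1 (by positivity)
      have h3 : (n:ℝ)⁻¹ * ∑ i, Za i ω < (n:ℝ)⁻¹ * ((n:ℝ) * p + (n:ℝ) * ε) :=
        mul_lt_mul_of_pos_left hsumZa (by positivity)
      have h4 : (n:ℝ)⁻¹ * ((n:ℝ) * p + (n:ℝ) * ε) = p + ε := by field_simp
      linarith
    -- the composed CDF value
    have hevalΦB : evalE ΦB (geninvE ΦA p) = ΦB q₀ := by
      rw [hq₀eq]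
      simp [evalE]
    constructor
    · -- lower bound
      rw [hevalΦB]
      have hqle : geninvE (fun x => empCDF n As ω x + ε) p ≤ ((q₀ : ℝ) : EReal) :=
        geninvE_le_coe hFaq
      set q : EReal := geninvE (fun x => empCDF n As ω x + ε) p with hqdef
      have htri : q = ⊥ ∨ q = ⊤ ∨ ∃ x : ℝ, q = (x : EReal) := by
        clear hqle hqdef
        induction q using EReal.rec with
        | bot => exact Or.inl rfl
        | coe x => exact Or.inr (Or.inr ⟨x, rfl⟩)
        | top => exact Or.inr (Or.inl rfl)
      have hkey : evalE (empCDF n Bs ω) q ≤ ΦB q₀ + ε := by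
        rcases htri with hq | hq | ⟨x, hq⟩
        · rw [hq]
          have heq : evalE (empCDF n Bs ω) ⊥ = sInf (Set.range (empCDF n Bs ω)) := by
            simp [evalE]
          rw [heq]
          have hble : sInf (Set.range (empCDF n Bs ω)) ≤ empCDF n Bs ω q₀ := by
            refine csInf_le ⟨0, ?_⟩ (Set.mem_range_self q₀)
            rintro y ⟨x, rfl⟩
            exact empCDF_nonneg n Bs ω x
          linarith
        · rw [hq] at hqle
          exact absurd hqle (by simp)
        · rw [hq] at hqle ⊢
          have hxq : x ≤ q₀ := EReal.coe_le_coe_iff.mp hqle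
          have heq : evalE (empCDF n Bs ω) ((x : ℝ) : EReal) = empCDF n Bs ω x := by
            simp [evalE]
          rw [heq]
          have := empCDF_mono n Bs ω hxq
          linarith
      linarith
    · -- upper bound
      rw [hevalΦB]
      have hrge : ((q₀ : ℝ) : EReal) ≤ geninvE (fun x => empCDF n As ω x - ε) p := by
        refine coe_le_geninvE fun x hx => ?_
        by_contra hlt'
        push_neg at hlt'
        have := hFax x hlt'
        linarith
      set r : EReal := geninvE (fun x => empCDF n As ω x - ε) p with hrdef
      have htri : r = ⊥ ∨ r = ⊤ ∨ ∃ x : ℝ, r = (x : EReal) := by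
        clear hrge hrdef
        induction r using EReal.rec with
        | bot => exact Or.inl rfl
        | coe x => exact Or.inr (Or.inr ⟨x, rfl⟩)
        | top => exact Or.inr (Or.inl rfl)
      have hkey : ΦB q₀ - ε ≤ evalE (empCDF n Bs ω) r := by
        rcases htri with hr | hr | ⟨x, hr⟩
        · rw [hr] at hrge
          exact absurd hrge (by simp)
        · rw [hr]
          have heq : evalE (empCDF n Bs ω) ⊤ = sSup (Set.range (empCDF n Bs ω)) := by
            simp [evalE]
          rw [heq]
          have hble : empCDF n Bs ω q₀ ≤ sSup (Set.range (empCDF n Bs ω)) := by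
            refine le_csSup ⟨1, ?_⟩ (Set.mem_range_self q₀)
            rintro y ⟨x, rfl⟩
            exact empCDF_le_one n Bs ω x
          linarith
        · rw [hr] at hrge ⊢
          have hxq : q₀ ≤ x := EReal.coe_le_coe_iff.mp hrge
          have heq : evalE (empCDF n Bs ω) ((x : ℝ) : EReal) = empCDF n Bs ω x := by
            simp [evalE]
          rw [heq]
          have := empCDF_mono n Bs ω hxq
          linarith
      linarith
  -- assemble
  calc ENNReal.ofReal (1 - 2 * α)
      = 1 - ENNReal.ofReal (2 * α) := by
        rw [ENNReal.ofReal_sub 1 (by positivity), ENNReal.ofReal_one]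
    _ ≤ 1 - μ Bad := tsub_le_tsub_left hμBad 1
    _ = μ Badᶜ := (prob_compl_eq_one_sub hBadmeas).symm
    _ ≤ _ := measure_mono hsub
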